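/- Let λ : 𝕋^d → ℝ be continuous with 0 < λ_b ≤ q < 1 and λ_b ≥ 1/D (D ≥ 1) for all b, Hölder with exponent α, and let Q : 𝕋^d × [0,1] → ℝ be Hölder in b with exponent α uniformly in x, Lipschitz in x uniformly in b, and bounded. Assume 0 < α and θ := μ^α q < 1, where μ > 1 is such that dist(Ab, Ab') ≤ μ dist(b,b') for all b,b'. Then the solution h = LQ of the normalized homological equation, h(b,x) = −Σ_{n=0}^{∞} Π_n(b) Q(F₀^n(b,x))/λ_{A^n b}, is Hölder in b with the same exponent α: there is a constant C_h (depending only on ||Q||_C, the Hölder constant of Q, the Lipschitz-in-x constant of Q, the Hölder constant of λ, D, q, μ, α) such that |h(b₁,x) − h(b₂,x)| ≤ C_h dist(b₁,b₂)^α for all b₁,b₂ ∈ 𝕋^d and x ∈ [0,1]. -/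

import Mathlib

open Set Function

noncomputable section

/-- The `d`-dimensional torus `ℝ^d/ℤ^d` with the (sup-)product metric. -/
abbrev Torus (d : ℕ) := Fin d → AddCircle (1 : ℝ)

/-- `Π_n(b) = λ_b λ_{Ab} ⋯ λ_{A^{n-1}b}` (and `Π_0(b) = 1`). -/
def PiProd {d : ℕ} (A : Torus d → Torus d) (lam : Torus d → ℝ) (n : ℕ) (b : Torus d) : ℝ :=
  ∏ k ∈ Finset.range n, lam (A^[k] b)

/-- The solution of the normalized homological equation,
`h = LQ`, `h(b,x) = −Σ_{n≥0} Π_n(b) Q(A^n b, Π_n(b) x)/λ_{A^n b}`. -/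
def homSol {d : ℕ} (A : Torus d → Torus d) (lam : Torus d → ℝ) (Q : Torus d → ℝ → ℝ) :
    Torus d → ℝ → ℝ :=
  fun b x => -∑' n : ℕ, PiProd A lam n b * Q (A^[n] b) (PiProd A lam n b * x) / lam (A^[n] b)

set_option maxHeartbeats 1000000 in
/-- Hölder continuity in the base of the solution `h = LQ` of the normalized
homological equation: if `λ` is `α`-Hölder, `Q` is `α`-Hölder in `b` and Lipschitz in `x`,
and `θ = μ^α q < 1`, then there is a constant `C_h` with
`|h(b₁,x) − h(b₂,x)| ≤ C_h dist(b₁,b₂)^α` for all `b₁, b₂ ∈ 𝕋^d`, `x ∈ [0,1]`. -/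
theorem statement5 {d : ℕ} (A : Torus d → Torus d)
    (μ : ℝ) (hμ : 1 < μ)
    (hA : ∀ b₁ b₂ : Torus d, dist (A b₁) (A b₂) ≤ μ * dist b₁ b₂)
    (lam : Torus d → ℝ) (hlamc : Continuous lam)
    (q D : ℝ) (hq : q < 1) (hD : 1 ≤ D)
    (hlam : ∀ b, 0 < lam b ∧ lam b ≤ q) (hDlow : ∀ b, 1 / D ≤ lam b)
    (α Clam : ℝ) (hα : 0 < α) (hθ : μ ^ α * q < 1)
    (hlamHol : ∀ b₁ b₂ : Torus d, |lam b₁ - lam b₂| ≤ Clam * dist b₁ b₂ ^ α)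
    (Q : Torus d → ℝ → ℝ) (QC CQ LQ : ℝ)
    (hQC : ∀ b : Torus d, ∀ x ∈ Icc (0:ℝ) 1, |Q b x| ≤ QC)
    (hQHol : ∀ b₁ b₂ : Torus d, ∀ x ∈ Icc (0:ℝ) 1, |Q b₁ x - Q b₂ x| ≤ CQ * dist b₁ b₂ ^ α)
    (hQLip : ∀ b : Torus d, ∀ x ∈ Icc (0:ℝ) 1, ∀ y ∈ Icc (0:ℝ) 1,
      |Q b x - Q b y| ≤ LQ * |x - y|) :
    ∃ Ch : ℝ, ∀ b₁ b₂ : Torus d, ∀ x ∈ Icc (0:ℝ) 1,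
      |homSol A lam Q b₁ x - homSol A lam Q b₂ x| ≤ Ch * dist b₁ b₂ ^ α := by
  classical
  have hb0 : ∃ b : Torus d, True := ⟨fun _ => 0, trivial⟩
  obtain ⟨b0, -⟩ := hb0
  have hq0 : 0 < q := lt_of_lt_of_le (hlam b0).1 (hlam b0).2
  have hμ0 : 0 < μ := lt_trans one_pos hμ
  set M := μ ^ α with hMdef
  have hM1 : 1 < M := (Real.one_lt_rpow_iff_of_pos hμ0).mpr (Or.inl ⟨hμ, hα⟩)
  have hM0 : 0 < M := lt_trans one_pos hM1
  set θ := M * q with hθdef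
  have hθ0 : 0 < θ := mul_pos hM0 hq0
  have hθ1 : θ < 1 := hθ
  have hD0 : 0 < D := lt_of_lt_of_le one_pos hD
  set Cl := max Clam 0 with hCldef
  set CQ' := max CQ 0 with hCQdef
  set LQ' := max LQ 0 with hLQdef
  set QC' := max QC 0 with hQCdef
  have hCl0 : 0 ≤ Cl := le_max_right _ _
  have hCQ0 : 0 ≤ CQ' := le_max_right _ _
  have hLQ0 : 0 ≤ LQ' := le_max_right _ _
  have hQC0 : 0 ≤ QC' := le_max_right _ _
  set K1 := Cl / (q * (M - 1)) with hK1def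
  have hqM0 : 0 < q * (M - 1) := mul_pos hq0 (sub_pos.mpr hM1)
  have hK10 : 0 ≤ K1 := div_nonneg hCl0 hqM0.le
  have hK1eq : K1 * (q * (M - 1)) = Cl := div_mul_cancel₀ _ (ne_of_gt hqM0)
  set Ctot := D * (K1 * QC' + CQ' + LQ' * K1) + D ^ 2 * QC' * Cl with hCtotdef
  refine ⟨Ctot / (1 - θ), ?_⟩
  intro b₁ b₂ x hx
  set ε := dist b₁ b₂ with hεdef
  have hε0 : 0 ≤ ε := dist_nonneg
  have hεα : 0 ≤ ε ^ α := Real.rpow_nonneg hε0 α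
  -- distance expansion bound
  have hiter : ∀ n : ℕ, dist (A^[n] b₁) (A^[n] b₂) ≤ μ ^ n * ε := by
    intro n
    induction n with
    | zero => simp [hεdef]
    | succ n ih =>
      rw [Function.iterate_succ_apply', Function.iterate_succ_apply', pow_succ]
      calc dist (A (A^[n] b₁)) (A (A^[n] b₂)) ≤ μ * dist (A^[n] b₁) (A^[n] b₂) := hA _ _
        _ ≤ μ * (μ ^ n * ε) := by
            exact mul_le_mul_of_nonneg_left ih hμ0.le
        _ = μ ^ n * μ * ε := by ring
  have hdistα : ∀ n : ℕ, dist (A^[n] b₁) (A^[n] b₂) ^ α ≤ M ^ n * ε ^ α := by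
    intro n
    calc dist (A^[n] b₁) (A^[n] b₂) ^ α ≤ (μ ^ n * ε) ^ α :=
          Real.rpow_le_rpow dist_nonneg (hiter n) hα.le
      _ = (μ ^ n) ^ α * ε ^ α := Real.mul_rpow (pow_nonneg hμ0.le n) hε0
      _ = M ^ n * ε ^ α := by
          rw [hMdef, ← Real.rpow_natCast μ n, ← Real.rpow_mul hμ0.le,
            mul_comm (n : ℝ) α, Real.rpow_mul hμ0.le, Real.rpow_natCast]
  -- lam bounds
  have hlamHol' : ∀ u v : Torus d, |lam u - lam v| ≤ Cl * dist u v ^ α := fun u v =>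
    (hlamHol u v).trans (mul_le_mul_of_nonneg_right (le_max_left _ _)
      (Real.rpow_nonneg dist_nonneg α))
  have hlaminv : ∀ b : Torus d, (lam b)⁻¹ ≤ D := by
    intro b
    have h1 : 1 ≤ lam b * D := (div_le_iff₀ hD0).mp (hDlow b)
    nlinarith [mul_inv_cancel₀ (ne_of_gt (hlam b).1)]
  -- PiProd bounds
  have hP0 : ∀ (b : Torus d) (n : ℕ), 0 < PiProd A lam n b := fun b n =>
    Finset.prod_pos fun k _ => (hlam _).1
  have hPq : ∀ (b : Torus d) (n : ℕ), PiProd A lam n b ≤ q ^ n := by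
    intro b n
    calc PiProd A lam n b ≤ ∏ _k ∈ Finset.range n, q :=
          Finset.prod_le_prod (fun k _ => (hlam _).1.le) (fun k _ => (hlam _).2)
      _ = q ^ n := by simp
  have hP1 : ∀ (b : Torus d) (n : ℕ), PiProd A lam n b ≤ 1 := fun b n =>
    (hPq b n).trans (pow_le_one₀ hq0.le hq.le)
  have hPsucc : ∀ (b : Torus d) (n : ℕ),
      PiProd A lam (n + 1) b = PiProd A lam n b * lam (A^[n] b) := fun b n =>
    Finset.prod_range_succ _ _
  -- Hölder bound for PiProd
  have hPHol : ∀ n : ℕ, |PiProd A lam n b₁ - PiProd A lam n b₂| ≤ K1 * θ ^ n * ε ^ α := by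
    intro n
    induction n with
    | zero =>
      simp only [PiProd, Finset.range_zero, Finset.prod_empty, sub_self, abs_zero, pow_zero,
        mul_one]
      positivity
    | succ n ih =>
      have e : PiProd A lam (n + 1) b₁ - PiProd A lam (n + 1) b₂ =
          (PiProd A lam n b₁ - PiProd A lam n b₂) * lam (A^[n] b₁) +
            PiProd A lam n b₂ * (lam (A^[n] b₁) - lam (A^[n] b₂)) := by
        rw [hPsucc, hPsucc]; ring
      have hqnθ : q ^ n * M ^ n = θ ^ n := by rw [hθdef, mul_pow]; ring
      calc |PiProd A lam (n + 1) b₁ - PiProd A lam (n + 1) b₂|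
          ≤ |PiProd A lam n b₁ - PiProd A lam n b₂| * |lam (A^[n] b₁)| +
            |PiProd A lam n b₂| * |lam (A^[n] b₁) - lam (A^[n] b₂)| := by
            rw [e]; exact (abs_add_le _ _).trans (by rw [abs_mul, abs_mul])
        _ ≤ (K1 * θ ^ n * ε ^ α) * q + q ^ n * (Cl * (M ^ n * ε ^ α)) := by
            apply add_le_add
            · apply mul_le_mul ih _ (abs_nonneg _) (by positivity)
              rw [abs_of_pos (hlam _).1]; exact (hlam _).2
            · apply mul_le_mul _ _ (abs_nonneg _) (by positivity)
              · rw [abs_of_pos (hP0 _ _)]; exact hPq _ _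
              · exact (hlamHol' _ _).trans
                  (mul_le_mul_of_nonneg_left (hdistα n) hCl0)
        _ = K1 * q * (θ ^ n * ε ^ α) + Cl * ((q ^ n * M ^ n) * ε ^ α) := by ring
        _ = K1 * q * (θ ^ n * ε ^ α) + Cl * (θ ^ n * ε ^ α) := by rw [hqnθ]
        _ = K1 * θ ^ (n + 1) * ε ^ α := by
            rw [← hK1eq, pow_succ, hθdef]; ring
  -- membership of arguments
  have hxmem : ∀ (b : Torus d) (n : ℕ), PiProd A lam n b * x ∈ Icc (0:ℝ) 1 := by
    intro b n
    constructor
    · exact mul_nonneg (hP0 b n).le hx.1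
    · exact mul_le_one₀ (hP1 b n) hx.1 hx.2
  -- Q bounds (nonneg constants)
  have hQC' : ∀ (b : Torus d), ∀ y ∈ Icc (0:ℝ) 1, |Q b y| ≤ QC' := fun b y hy =>
    (hQC b y hy).trans (le_max_left _ _)
  have hQHol' : ∀ (u v : Torus d), ∀ y ∈ Icc (0:ℝ) 1,
      |Q u y - Q v y| ≤ CQ' * dist u v ^ α := fun u v y hy =>
    (hQHol u v y hy).trans (mul_le_mul_of_nonneg_right (le_max_left _ _)
      (Real.rpow_nonneg dist_nonneg α))
  have hQLip' : ∀ (b : Torus d), ∀ y ∈ Icc (0:ℝ) 1, ∀ z ∈ Icc (0:ℝ) 1,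
      |Q b y - Q b z| ≤ LQ' * |y - z| := fun b y hy z hz =>
    (hQLip b y hy z hz).trans (mul_le_mul_of_nonneg_right (le_max_left _ _) (abs_nonneg _))
  -- the summand
  set t : Torus d → ℕ → ℝ := fun b n =>
    PiProd A lam n b * Q (A^[n] b) (PiProd A lam n b * x) / lam (A^[n] b) with htdef
  have htbound : ∀ (b : Torus d) (n : ℕ), |t b n| ≤ D * QC' * q ^ n := by
    intro b n
    rw [htdef]
    simp only [div_eq_mul_inv]
    rw [abs_mul, abs_mul, abs_of_pos (hP0 b n), abs_of_pos (inv_pos.mpr (hlam _).1)]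
    calc PiProd A lam n b * |Q (A^[n] b) (PiProd A lam n b * x)| * (lam (A^[n] b))⁻¹
        ≤ q ^ n * QC' * D := by
          apply mul_le_mul _ (hlaminv _) (inv_pos.mpr (hlam _).1).le (by positivity)
          exact mul_le_mul (hPq b n) (hQC' _ _ (hxmem b n)) (abs_nonneg _) (by positivity)
      _ = D * QC' * q ^ n := by ring
  have hsum : ∀ b : Torus d, Summable (t b) := by
    intro b
    apply Summable.of_norm_bounded (g := fun n => D * QC' * q ^ n)
    · exact (summable_geometric_of_lt_one hq0.le hq).mul_left _
    · intro n; rw [Real.norm_eq_abs]; exact htbound b n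
  -- termwise Hölder bound
  have hterm : ∀ n : ℕ, |t b₁ n - t b₂ n| ≤ Ctot * θ ^ n * ε ^ α := by
    intro n
    set P₁ := PiProd A lam n b₁ with hP₁
    set P₂ := PiProd A lam n b₂ with hP₂
    set l₁ := lam (A^[n] b₁) with hl₁
    set l₂ := lam (A^[n] b₂) with hl₂
    set Q₁ := Q (A^[n] b₁) (P₁ * x) with hQ₁
    set Q₂ := Q (A^[n] b₂) (P₂ * x) with hQ₂
    have hl₁0 : 0 < l₁ := (hlam _).1
    have hl₂0 : 0 < l₂ := (hlam _).1
    have hP₁0 : 0 < P₁ := hP0 b₁ n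
    have hP₂0 : 0 < P₂ := hP0 b₂ n
    have hPq₁ : P₁ ≤ q ^ n := hPq b₁ n
    have hPq₂ : P₂ ≤ q ^ n := hPq b₂ n
    have hxm₁ : P₁ * x ∈ Icc (0:ℝ) 1 := hxmem b₁ n
    have hxm₂ : P₂ * x ∈ Icc (0:ℝ) 1 := hxmem b₂ n
    have hPd : |P₁ - P₂| ≤ K1 * θ ^ n * ε ^ α := hPHol n
    have hli₁ : l₁⁻¹ ≤ D := hlaminv (A^[n] b₁)
    have hli₂ : l₂⁻¹ ≤ D := hlaminv (A^[n] b₂)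
    have hQ₁b : |Q₁| ≤ QC' := hQC' _ _ hxm₁
    have hQ₂b : |Q₂| ≤ QC' := hQC' _ _ hxm₂
    have e : t b₁ n - t b₂ n =
        (P₁ - P₂) * Q₁ * l₁⁻¹ + P₂ * (Q₁ - Q₂) * l₁⁻¹ + P₂ * Q₂ * (l₁⁻¹ - l₂⁻¹) := by
      rw [htdef]
      simp only [div_eq_mul_inv]
      ring
    have hinvdiff : |l₁⁻¹ - l₂⁻¹| ≤ D * D * (Cl * (M ^ n * ε ^ α)) := by
      have e2 : l₁⁻¹ - l₂⁻¹ = (l₂ - l₁) * l₁⁻¹ * l₂⁻¹ := by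
        field_simp
      rw [e2, abs_mul, abs_mul, abs_of_pos (inv_pos.mpr hl₁0), abs_of_pos (inv_pos.mpr hl₂0)]
      have h1 : |l₂ - l₁| ≤ Cl * (M ^ n * ε ^ α) := by
        rw [abs_sub_comm, hl₁, hl₂]
        exact (hlamHol' _ _).trans (mul_le_mul_of_nonneg_left (hdistα n) hCl0)
      calc |l₂ - l₁| * l₁⁻¹ * l₂⁻¹ ≤ (Cl * (M ^ n * ε ^ α)) * D * D := by
            apply mul_le_mul _ hli₂ (inv_pos.mpr hl₂0).le (by positivity)
            exact mul_le_mul h1 hli₁ (inv_pos.mpr hl₁0).le (by positivity)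
        _ = D * D * (Cl * (M ^ n * ε ^ α)) := by ring
    have hQdiff : |Q₁ - Q₂| ≤ CQ' * (M ^ n * ε ^ α) + LQ' * (K1 * θ ^ n * ε ^ α) := by
      have e3 : Q₁ - Q₂ = (Q (A^[n] b₁) (P₁ * x) - Q (A^[n] b₂) (P₁ * x)) +
          (Q (A^[n] b₂) (P₁ * x) - Q (A^[n] b₂) (P₂ * x)) := by rw [hQ₁, hQ₂]; ring
      rw [e3]
      apply (abs_add_le _ _).trans
      apply add_le_add
      · exact (hQHol' _ _ _ hxm₁).trans
          (mul_le_mul_of_nonneg_left (hdistα n) hCQ0)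
      · calc |Q (A^[n] b₂) (P₁ * x) - Q (A^[n] b₂) (P₂ * x)| ≤ LQ' * |P₁ * x - P₂ * x| :=
              hQLip' _ _ hxm₁ _ hxm₂
          _ ≤ LQ' * (K1 * θ ^ n * ε ^ α) := by
              apply mul_le_mul_of_nonneg_left _ hLQ0
              have : P₁ * x - P₂ * x = (P₁ - P₂) * x := by ring
              rw [this, abs_mul]
              calc |P₁ - P₂| * |x| ≤ (K1 * θ ^ n * ε ^ α) * 1 := by
                    apply mul_le_mul hPd _ (abs_nonneg _) (by positivity)
                    rw [abs_of_nonneg hx.1]; exact hx.2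
                _ = K1 * θ ^ n * ε ^ α := mul_one _
    have hqnθ : q ^ n * M ^ n = θ ^ n := by rw [hθdef, mul_pow]; ring
    have hqn1 : q ^ n ≤ 1 := pow_le_one₀ hq0.le hq.le
    have hθn0 : (0:ℝ) < θ ^ n := pow_pos hθ0 n
    calc |t b₁ n - t b₂ n| ≤ |(P₁ - P₂) * Q₁ * l₁⁻¹| + |P₂ * (Q₁ - Q₂) * l₁⁻¹|
          + |P₂ * Q₂ * (l₁⁻¹ - l₂⁻¹)| := by
          rw [e]; exact (abs_add_le _ _).trans (add_le_add_left (abs_add_le _ _) _)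
      _ ≤ (K1 * θ ^ n * ε ^ α) * QC' * D
          + q ^ n * (CQ' * (M ^ n * ε ^ α) + LQ' * (K1 * θ ^ n * ε ^ α)) * D
          + q ^ n * QC' * (D * D * (Cl * (M ^ n * ε ^ α))) := by
          apply add_le_add (add_le_add ?_ ?_) ?_
          · rw [abs_mul, abs_mul, abs_of_pos (inv_pos.mpr hl₁0)]
            apply mul_le_mul _ hli₁ (inv_pos.mpr hl₁0).le (by positivity)
            exact mul_le_mul hPd hQ₁b (abs_nonneg _) (by positivity)
          · rw [abs_mul, abs_mul, abs_of_pos (inv_pos.mpr hl₁0), abs_of_pos hP₂0]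
            apply mul_le_mul _ hli₁ (inv_pos.mpr hl₁0).le (by positivity)
            exact mul_le_mul hPq₂ hQdiff (abs_nonneg _) (by positivity)
          · rw [abs_mul, abs_mul, abs_of_pos hP₂0]
            exact mul_le_mul (mul_le_mul hPq₂ hQ₂b
              (abs_nonneg _) (by positivity)) hinvdiff (abs_nonneg _) (by positivity)
      _ = (D * (K1 * QC')) * (θ ^ n * ε ^ α)
          + (D * CQ') * ((q ^ n * M ^ n) * ε ^ α)
          + (D * (LQ' * K1)) * ((q ^ n * θ ^ n) * ε ^ α)
          + (D ^ 2 * QC' * Cl) * ((q ^ n * M ^ n) * ε ^ α) := by ring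
      _ ≤ (D * (K1 * QC')) * (θ ^ n * ε ^ α)
          + (D * CQ') * (θ ^ n * ε ^ α)
          + (D * (LQ' * K1)) * (θ ^ n * ε ^ α)
          + (D ^ 2 * QC' * Cl) * (θ ^ n * ε ^ α) := by
          rw [hqnθ]
          apply add_le_add (add_le_add (add_le_add le_rfl le_rfl) ?_) le_rfl
          apply mul_le_mul_of_nonneg_left _ (by positivity)
          apply mul_le_mul_of_nonneg_right _ hεα
          calc q ^ n * θ ^ n ≤ 1 * θ ^ n :=
                mul_le_mul_of_nonneg_right hqn1 hθn0.le
            _ = θ ^ n := one_mul _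
      _ = Ctot * θ ^ n * ε ^ α := by rw [hCtotdef]; ring
  -- conclude
  have hdiffsum : Summable (fun n => t b₁ n - t b₂ n) := (hsum b₁).sub (hsum b₂)
  have hboundsum : Summable (fun n : ℕ => Ctot * θ ^ n * ε ^ α) := by
    have := ((summable_geometric_of_lt_one hθ0.le hθ1).mul_left Ctot).mul_right (ε ^ α)
    simpa [mul_assoc] using this
  have key : |∑' n, t b₁ n - ∑' n, t b₂ n| ≤ Ctot / (1 - θ) * ε ^ α := by
    rw [← Summable.tsum_sub (hsum b₁) (hsum b₂)]
    calc |∑' n, (t b₁ n - t b₂ n)| ≤ ∑' n, |t b₁ n - t b₂ n| := by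
          have := norm_tsum_le_tsum_norm (f := fun n => t b₁ n - t b₂ n)
            (hdiffsum.abs.congr (fun n => (Real.norm_eq_abs _).symm))
          simpa [Real.norm_eq_abs] using this
      _ ≤ ∑' n : ℕ, Ctot * θ ^ n * ε ^ α :=
          Summable.tsum_le_tsum hterm hdiffsum.abs hboundsum
      _ = Ctot / (1 - θ) * ε ^ α := by
          have : ∀ n : ℕ, Ctot * θ ^ n * ε ^ α = (Ctot * ε ^ α) * θ ^ n := fun n => by ring
          rw [tsum_congr this, tsum_mul_left, tsum_geometric_of_lt_one hθ0.le hθ1]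
          ring
  have hh : homSol A lam Q b₁ x - homSol A lam Q b₂ x =
      -(∑' n, t b₁ n - ∑' n, t b₂ n) := by
    simp only [homSol, htdef]
    ring
  rw [hh, abs_neg]
  exact key
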